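/- Let p be an odd prime and m ≥ 2. The linear code C_{D(0)} = {c(a) : a ∈ F_{p^m}}, viewed as a set of functions from D(0) to F_p, has exactly p^{m-1} elements; equivalently, for a ∈ F_{p^m}, the codeword c(a) is the zero word if and only if a lies in the prime subfield F_p. -/

import Mathlib

/-- Let `p` be an odd prime and `m ≥ 2`. The linear code `C_{D(0)}`, viewed as a set of
functions from `D(0)` to `F_p`, has exactly `p^(m-1)` elements; equivalently, for
`a ∈ F_{p^m}`, the codeword `c(a)` is the zero word iff `a` lies in the prime subfield. -/
theorem card_code_CD0
    (p : ℕ) [Fact p.Prime] (hp2 : p ≠ 2) (m : ℕ) (hm : 2 ≤ m)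
    (F : Type*) [Field F] [Fintype F] [DecidableEq F] [Algebra (ZMod p) F]
    (hcard : Fintype.card F = p ^ m) :
    (Set.range (fun a : F =>
        fun d : {d : F // d ≠ 0 ∧ Algebra.trace (ZMod p) F d = 0} =>
          Algebra.trace (ZMod p) F (a * d.1))).ncard = p ^ (m - 1) ∧
    (∀ a : F,
      (fun d : {d : F // d ≠ 0 ∧ Algebra.trace (ZMod p) F d = 0} =>
          Algebra.trace (ZMod p) F (a * d.1)) = 0 ↔
        a ∈ Set.range (algebraMap (ZMod p) F)) := by
  have hp : p.Prime := Fact.out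
  -- the trace is surjective, pick x₀ with trace x₀ = 1
  obtain ⟨x₀, hx₀⟩ := Algebra.trace_surjective (ZMod p) F 1
  -- the key equivalence (part 2)
  have key : ∀ a : F,
      (fun d : {d : F // d ≠ 0 ∧ Algebra.trace (ZMod p) F d = 0} =>
          Algebra.trace (ZMod p) F (a * d.1)) = 0 ↔
        a ∈ Set.range (algebraMap (ZMod p) F) := by
    intro a
    constructor
    · intro h
      set c : ZMod p := Algebra.trace (ZMod p) F (a * x₀) with hc
      have hall : ∀ d : F, Algebra.trace (ZMod p) F (a * d)
          = c * Algebra.trace (ZMod p) F d := by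
        intro d
        set t : ZMod p := Algebra.trace (ZMod p) F d with ht
        set d' : F := d - t • x₀ with hd'
        have htr' : Algebra.trace (ZMod p) F d' = 0 := by
          simp [hd', map_sub, ← ht, hx₀, mul_one]
        have h1 : Algebra.trace (ZMod p) F (a * d') = 0 := by
          by_cases hz : d' = 0
          · simp [hz]
          · exact congrFun h ⟨d', hz, htr'⟩
        have hdd : d = d' + t • x₀ := by simp [hd']
        calc Algebra.trace (ZMod p) F (a * d)
            = Algebra.trace (ZMod p) F (a * d' + t • (a * x₀)) := by
              rw [hdd, mul_add, mul_smul_comm]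
          _ = Algebra.trace (ZMod p) F (a * d') + t * Algebra.trace (ZMod p) F (a * x₀) := by
              rw [map_add, map_smul, smul_eq_mul]
          _ = c * t := by rw [h1, zero_add, hc, mul_comm]
      refine ⟨c, ?_⟩
      have hnd := (traceForm_nondegenerate (ZMod p) F).1 (algebraMap (ZMod p) F c - a)
      have : algebraMap (ZMod p) F c - a = 0 := by
        apply hnd
        intro y
        rw [Algebra.traceForm_apply, sub_mul, map_sub, hall, ← Algebra.smul_def, map_smul,
          smul_eq_mul, sub_self]
      exact sub_eq_zero.mp this
    · rintro ⟨c, rfl⟩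
      funext d
      have : (algebraMap (ZMod p) F c) * d.1 = c • d.1 := (Algebra.smul_def c d.1).symm
      simp [this, map_smul, d.2.2]
  refine ⟨?_, key⟩
  -- part 1: cardinality of the range
  set L : F →ₗ[ZMod p] ({d : F // d ≠ 0 ∧ Algebra.trace (ZMod p) F d = 0} → ZMod p) :=
    { toFun := fun a d => Algebra.trace (ZMod p) F (a * d.1)
      map_add' := by intro a b; funext d; simp [add_mul]
      map_smul' := by intro c a; funext d; simp [smul_mul_assoc] } with hLdef
  have hker : LinearMap.ker L = Submodule.span (ZMod p) {1} := by
    ext a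
    rw [LinearMap.mem_ker]
    constructor
    · intro h
      obtain ⟨c, rfl⟩ := (key a).mp h
      rw [Submodule.mem_span_singleton]
      exact ⟨c, by rw [Algebra.smul_def, mul_one]⟩
    · intro h
      rw [Submodule.mem_span_singleton] at h
      obtain ⟨c, rfl⟩ := h
      exact (key _).mpr ⟨c, by rw [Algebra.smul_def, mul_one]⟩
  have hkercard : Nat.card (LinearMap.ker L) = p := by
    rw [hker]
    have hseteq : ((Submodule.span (ZMod p) ({1} : Set F) : Submodule (ZMod p) F) : Set F) =
        Set.range (algebraMap (ZMod p) F) := by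
      ext x
      rw [SetLike.mem_coe, Submodule.mem_span_singleton]
      constructor
      · rintro ⟨c, rfl⟩; exact ⟨c, by rw [Algebra.smul_def, mul_one]⟩
      · rintro ⟨c, rfl⟩; exact ⟨c, by rw [Algebra.smul_def, mul_one]⟩
    rw [show Nat.card (Submodule.span (ZMod p) ({1} : Set F)) =
        Nat.card (Set.range (algebraMap (ZMod p) F)) from
        Nat.card_congr (Equiv.setCongr hseteq),
      Nat.card_range_of_injective (algebraMap (ZMod p) F).injective,
      Nat.card_eq_fintype_card, ZMod.card]
  have hq := Submodule.card_eq_card_quotient_mul_card (LinearMap.ker L)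
  have hrange : Nat.card (LinearMap.range L) = Nat.card (F ⧸ LinearMap.ker L) :=
    Nat.card_congr (LinearMap.quotKerEquivRange L).symm.toEquiv
  have hFcard : Nat.card F = p ^ m := by rw [Nat.card_eq_fintype_card, hcard]
  have hmain : Nat.card (LinearMap.range L) * p = p ^ m := by
    calc Nat.card (LinearMap.range L) * p
        = Nat.card (LinearMap.ker L) * Nat.card (F ⧸ LinearMap.ker L) := by
          rw [hrange, hkercard, mul_comm]
      _ = p ^ m := by rw [← hq, hFcard]
  have hset : Set.range (fun a : F =>
      fun d : {d : F // d ≠ 0 ∧ Algebra.trace (ZMod p) F d = 0} =>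
        Algebra.trace (ZMod p) F (a * d.1)) = (LinearMap.range L : Set _) := by
    ext f
    simp only [Set.mem_range, SetLike.mem_coe, LinearMap.mem_range]
    rfl
  rw [hset, ← Nat.card_coe_set_eq]
  have hpow : p ^ (m - 1) * p = p ^ m := by
    rw [← pow_succ, Nat.sub_add_cancel (le_trans one_le_two hm)]
  exact Nat.eq_of_mul_eq_mul_right hp.pos (hmain.trans hpow.symm)
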